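/- Let (X,ρ) be a complete metric space, N ≥ 1, w_1,…,w_N : X → X continuous and p_1,…,p_N : X → [0,1] continuous with Σ_{i=1}^N p_i(x) = 1 for all x. Suppose r, ω : [0,∞) → [0,∞) are nondecreasing, concave, continuous at 0 with r(0) = ω(0) = 0, and there is T > 0 such that for every 0 < t < T the series Σ_{n=1}^∞ ω(r^n(t)) converges and r(t) < t (r^n the n-th iterate of r). Assume Σ_{i=1}^N p_i(x) ρ(w_i(x), w_i(y)) ≤ r(ρ(x,y)) and Σ_{i=1}^N |p_i(x) − p_i(y)| ≤ ω(ρ(x,y)) for all x, y ∈ X. Define Pφ(x) = Σ_{i=1}^N p_i(x) φ(w_i(x)). Then for every bounded Lipschitz φ : X → ℝ the family of iterates {P^nφ : n ∈ ℕ} is equicontinuous at every point of X. -/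

import Mathlib

open MeasureTheory Filter Topology

/-- The transition operator `Pφ(x) = Σᵢ pᵢ(x) φ(wᵢ(x))` of an iterated function system,
acting on real-valued functions. -/
def ifsOp {X : Type*} {N : ℕ} (w : Fin N → X → X) (p : Fin N → X → ℝ)
    (φ : X → ℝ) : X → ℝ :=
  fun x => ∑ i : Fin N, p i x * φ (w i x)

private lemma concaveOn_comp_aux {g f : ℝ → ℝ} (hg : ConcaveOn ℝ (Set.Ici 0) g)
    (hgm : MonotoneOn g (Set.Ici 0)) (hf : ConcaveOn ℝ (Set.Ici 0) f)
    (hf0 : ∀ t, 0 ≤ t → 0 ≤ f t) : ConcaveOn ℝ (Set.Ici 0) (fun t => g (f t)) := by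
  refine ⟨convex_Ici 0, fun x hx y hy a b ha hb hab => ?_⟩
  have hfx : (0:ℝ) ≤ f x := hf0 x hx
  have hfy : (0:ℝ) ≤ f y := hf0 y hy
  have hmem : a • x + b • y ∈ Set.Ici (0:ℝ) := (convex_Ici 0) hx hy ha hb hab
  have h1 : a • f x + b • f y ≤ f (a • x + b • y) := hf.2 hx hy ha hb hab
  have h2 : (0:ℝ) ≤ a • f x + b • f y :=
    add_nonneg (smul_nonneg ha hfx) (smul_nonneg hb hfy)
  calc a • g (f x) + b • g (f y)
      ≤ g (a • f x + b • f y) := hg.2 (Set.mem_Ici.2 hfx) (Set.mem_Ici.2 hfy) ha hb hab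
    _ ≤ g (f (a • x + b • y)) := hgm (Set.mem_Ici.2 h2) (Set.mem_Ici.2 (hf0 _ hmem)) h1

/-- **Equicontinuity of the iterates of an IFS transition operator.** Under the
(r,ω)-contractivity conditions on a complete metric space, for every bounded Lipschitz
`φ : X → ℝ` the family of iterates `{Pⁿφ : n ∈ ℕ}` is equicontinuous at every point. -/
theorem ifs_iterates_equicontinuous
    {X : Type*} [MetricSpace X] [CompleteSpace X]
    (N : ℕ) (hN : 1 ≤ N) (w : Fin N → X → X) (p : Fin N → X → ℝ)
    (hw : ∀ i, Continuous (w i)) (hp : ∀ i, Continuous (p i))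
    (hp01 : ∀ i x, p i x ∈ Set.Icc (0:ℝ) 1)
    (hpsum : ∀ x, ∑ i : Fin N, p i x = 1)
    (r ω : ℝ → ℝ)
    (hr0 : r 0 = 0) (hω0 : ω 0 = 0)
    (hrnn : ∀ t, 0 ≤ t → 0 ≤ r t) (hωnn : ∀ t, 0 ≤ t → 0 ≤ ω t)
    (hrmono : MonotoneOn r (Set.Ici 0)) (hωmono : MonotoneOn ω (Set.Ici 0))
    (hrconc : ConcaveOn ℝ (Set.Ici 0) r) (hωconc : ConcaveOn ℝ (Set.Ici 0) ω)
    (hrcont : ContinuousWithinAt r (Set.Ici 0) 0)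
    (hωcont : ContinuousWithinAt ω (Set.Ici 0) 0)
    (T : ℝ) (hT : 0 < T)
    (hseries : ∀ t : ℝ, 0 < t → t < T →
      (Summable fun n : ℕ => ω (r^[n + 1] t)) ∧ r t < t)
    (hcontr : ∀ x y : X, ∑ i : Fin N, p i x * dist (w i x) (w i y) ≤ r (dist x y))
    (hplip : ∀ x y : X, ∑ i : Fin N, |p i x - p i y| ≤ ω (dist x y)) :
    ∀ φ : X → ℝ, (∃ K : NNReal, LipschitzWith K φ) → (∃ C : ℝ, ∀ x, |φ x| ≤ C) →
      ∀ x₀ : X, ∀ ε : ℝ, 0 < ε → ∃ δ > 0, ∀ y : X, dist y x₀ < δ → ∀ n : ℕ,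
        |((ifsOp w p)^[n] φ) y - ((ifsOp w p)^[n] φ) x₀| < ε := by
  intro φ hφK hφC x₀ ε hε
  obtain ⟨K, hK⟩ := hφK
  obtain ⟨C₀, hC₀⟩ := hφC
  set C : ℝ := max C₀ 0 with hCdef
  have hC : ∀ x, |φ x| ≤ C := fun x => le_max_of_le_left (hC₀ x)
  have hC0 : (0:ℝ) ≤ C := le_max_right _ _
  -- basic facts about iterates of r
  have hrit0 : ∀ n : ℕ, r^[n] (0:ℝ) = 0 := fun n => Function.iterate_fixed hr0 n
  have hritnn : ∀ n : ℕ, ∀ t : ℝ, 0 ≤ t → 0 ≤ r^[n] t := by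
    intro n
    induction n with
    | zero => intro t ht; simpa using ht
    | succ n ih =>
      intro t ht
      rw [Function.iterate_succ_apply']
      exact hrnn _ (ih t ht)
  have hritmono : ∀ n : ℕ, ∀ s t : ℝ, 0 ≤ s → s ≤ t → r^[n] s ≤ r^[n] t := by
    intro n
    induction n with
    | zero => intro s t _ h; simpa using h
    | succ n ih =>
      intro s t hs hst
      rw [Function.iterate_succ_apply', Function.iterate_succ_apply']
      exact hrmono (Set.mem_Ici.2 (hritnn n s hs))
        (Set.mem_Ici.2 (hritnn n t (hs.trans hst))) (ih s t hs hst)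
  have hritconc : ∀ n : ℕ, ConcaveOn ℝ (Set.Ici 0) (fun t => r^[n] t) := by
    intro n
    induction n with
    | zero => exact concaveOn_id (convex_Ici (0:ℝ))
    | succ n ih =>
      have : ConcaveOn ℝ (Set.Ici 0) (fun t => r^[n] (r t)) :=
        concaveOn_comp_aux ih (fun a ha b hb hab => hritmono n a b ha hab) hrconc hrnn
      simpa [Function.iterate_succ_apply] using this
  have hrle1 : ∀ s : ℝ, 0 ≤ s → s < T → r s ≤ s := by
    intro s hs hsT
    rcases eq_or_lt_of_le hs with h | h
    · rw [← h, hr0]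
    · exact le_of_lt (hseries s h hsT).2
  have hritle : ∀ n : ℕ, ∀ s : ℝ, 0 ≤ s → s < T → r^[n] s ≤ s := by
    intro n
    induction n with
    | zero => intro s _ _; simp
    | succ n ih =>
      intro s hs hsT
      rw [Function.iterate_succ_apply']
      exact (hrle1 _ (hritnn n s hs) ((ih s hs hsT).trans_lt hsT)).trans (ih s hs hsT)
  -- the modulus of continuity of the iterates
  set g : ℕ → ℝ → ℝ :=
    fun n t => (K : ℝ) * r^[n] t + C * ∑ k ∈ Finset.range n, ω (r^[k] t) with hgdef
  have hgconc : ∀ n, ConcaveOn ℝ (Set.Ici 0) (g n) := by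
    intro n
    have h1 : ConcaveOn ℝ (Set.Ici 0) (fun t => (K : ℝ) * r^[n] t) := by
      simpa [smul_eq_mul] using (hritconc n).smul (K.coe_nonneg)
    have hsumconc : ∀ m : ℕ, ConcaveOn ℝ (Set.Ici 0)
        (fun t => ∑ k ∈ Finset.range m, ω (r^[k] t)) := by
      intro m
      induction m with
      | zero => simpa using (concaveOn_const (0:ℝ) (convex_Ici (0:ℝ)))
      | succ m ihm =>
        have hterm : ConcaveOn ℝ (Set.Ici 0) (fun t => ω (r^[m] t)) :=
          concaveOn_comp_aux hωconc hωmono (hritconc m) (hritnn m)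
        have := ihm.add hterm
        simp only [Finset.sum_range_succ]
        exact this
    have h2 : ConcaveOn ℝ (Set.Ici 0)
        (fun t => C * ∑ k ∈ Finset.range n, ω (r^[k] t)) := by
      simpa [smul_eq_mul] using (hsumconc n).smul hC0
    have := h1.add h2
    exact this
  have hgmono : ∀ n, ∀ s t : ℝ, 0 ≤ s → s ≤ t → g n s ≤ g n t := by
    intro n s t hs hst
    refine add_le_add ?_ ?_
    · exact mul_le_mul_of_nonneg_left (hritmono n s t hs hst) K.coe_nonneg
    · refine mul_le_mul_of_nonneg_left (Finset.sum_le_sum fun k _ => ?_) hC0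
      exact hωmono (Set.mem_Ici.2 (hritnn k s hs))
        (Set.mem_Ici.2 (hritnn k t (hs.trans hst))) (hritmono k s t hs hst)
  have hgrec : ∀ n t, g (n + 1) t = g n (r t) + C * ω t := by
    intro n t
    simp only [hgdef]
    rw [Finset.sum_range_succ']
    simp only [Function.iterate_succ_apply, Function.iterate_zero_apply]
    ring
  -- uniform bound on the iterates
  have hbound : ∀ n : ℕ, ∀ x : X, |((ifsOp w p)^[n] φ) x| ≤ C := by
    intro n
    induction n with
    | zero => intro x; simpa using hC x
    | succ n ih =>
      intro x
      rw [Function.iterate_succ_apply']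
      refine (Finset.abs_sum_le_sum_abs _ _).trans ?_
      have : ∀ i : Fin N, |p i x * ((ifsOp w p)^[n] φ) (w i x)| ≤ p i x * C := by
        intro i
        rw [abs_mul, abs_of_nonneg (hp01 i x).1]
        exact mul_le_mul_of_nonneg_left (ih (w i x)) (hp01 i x).1
      refine (Finset.sum_le_sum fun i _ => this i).trans ?_
      rw [← Finset.sum_mul, hpsum x, one_mul]
  -- the key modulus estimate
  have hmod : ∀ n : ℕ, ∀ x y : X,
      |((ifsOp w p)^[n] φ) x - ((ifsOp w p)^[n] φ) y| ≤ g n (dist x y) := by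
    intro n
    induction n with
    | zero =>
      intro x y
      have := hK.dist_le_mul x y
      rw [Real.dist_eq] at this
      simpa [hgdef] using this
    | succ n ih =>
      intro x y
      rw [Function.iterate_succ_apply']
      set ψ : X → ℝ := (ifsOp w p)^[n] φ with hψ
      have key : ifsOp w p ψ x - ifsOp w p ψ y
          = (∑ i : Fin N, p i x * (ψ (w i x) - ψ (w i y)))
            + ∑ i : Fin N, (p i x - p i y) * ψ (w i y) := by
        simp only [ifsOp, ← Finset.sum_add_distrib, ← Finset.sum_sub_distrib]
        exact Finset.sum_congr rfl fun i _ => by ring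
      have h1 : |∑ i : Fin N, p i x * (ψ (w i x) - ψ (w i y))|
          ≤ ∑ i : Fin N, p i x * g n (dist (w i x) (w i y)) := by
        refine (Finset.abs_sum_le_sum_abs _ _).trans (Finset.sum_le_sum fun i _ => ?_)
        rw [abs_mul, abs_of_nonneg (hp01 i x).1]
        exact mul_le_mul_of_nonneg_left (ih (w i x) (w i y)) (hp01 i x).1
      have hJ : ∑ i : Fin N, p i x * g n (dist (w i x) (w i y))
          ≤ g n (∑ i : Fin N, p i x * dist (w i x) (w i y)) := by
        have := (hgconc n).le_map_sum (t := Finset.univ) (w := fun i => p i x)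
          (p := fun i => dist (w i x) (w i y)) (fun i _ => (hp01 i x).1) (hpsum x)
          (fun i _ => Set.mem_Ici.2 dist_nonneg)
        simpa [smul_eq_mul] using this
      have h2 : g n (∑ i : Fin N, p i x * dist (w i x) (w i y)) ≤ g n (r (dist x y)) :=
        hgmono n _ _ (Finset.sum_nonneg fun i _ => mul_nonneg (hp01 i x).1 dist_nonneg)
          (hcontr x y)
      have h3 : |∑ i : Fin N, (p i x - p i y) * ψ (w i y)| ≤ C * ω (dist x y) := by
        refine (Finset.abs_sum_le_sum_abs _ _).trans ?_
        have hterm : ∑ i : Fin N, |(p i x - p i y) * ψ (w i y)|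
            ≤ ∑ i : Fin N, |p i x - p i y| * C := by
          refine Finset.sum_le_sum fun i _ => ?_
          rw [abs_mul]
          exact mul_le_mul_of_nonneg_left (hbound n (w i y)) (abs_nonneg _)
        refine hterm.trans ?_
        rw [← Finset.sum_mul]
        calc (∑ i : Fin N, |p i x - p i y|) * C
            ≤ ω (dist x y) * C := mul_le_mul_of_nonneg_right (hplip x y) hC0
          _ = C * ω (dist x y) := mul_comm _ _
      calc |ifsOp w p ψ x - ifsOp w p ψ y|
          ≤ |∑ i : Fin N, p i x * (ψ (w i x) - ψ (w i y))|
            + |∑ i : Fin N, (p i x - p i y) * ψ (w i y)| := by rw [key]; exact abs_add_le _ _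
        _ ≤ g n (r (dist x y)) + C * ω (dist x y) :=
            add_le_add (h1.trans (hJ.trans h2)) h3
        _ = g (n + 1) (dist x y) := (hgrec n _).symm
  -- now the ε-δ argument
  set t₀ : ℝ := T / 2 with ht₀def
  have ht₀pos : 0 < t₀ := by positivity
  have ht₀T : t₀ < T := by simp only [ht₀def]; linarith
  obtain ⟨hsum, -⟩ := hseries t₀ ht₀pos ht₀T
  set f : ℕ → ℝ := fun n => ω (r^[n + 1] t₀) with hfdef
  have hfnn : ∀ n, 0 ≤ f n := fun n => hωnn _ (hritnn _ _ ht₀pos.le)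
  have hε3 : 0 < ε / (3 * (C + 1)) := by positivity
  obtain ⟨M₀, hM₀⟩ := (Metric.tendsto_atTop.1 (tendsto_sum_nat_add f)) (ε / (3 * (C + 1))) hε3
  have htail : ∑' k, f (k + M₀) < ε / (3 * (C + 1)) := by
    have := hM₀ M₀ le_rfl
    rw [Real.dist_eq, sub_zero] at this
    exact (le_abs_self _).trans_lt this
  set M : ℕ := M₀ + 1 with hMdef
  have hsumshift : Summable fun k => f (k + M₀) := (summable_nat_add_iff M₀).2 hsum
  -- continuity of the finite sum at 0
  have hcontk : ∀ k : ℕ, ContinuousWithinAt (fun t => ω (r^[k] t)) (Set.Ici 0) 0 := by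
    intro k
    have hrk : ContinuousWithinAt (fun t => r^[k] t) (Set.Ici 0) 0 := by
      induction k with
      | zero => exact continuousWithinAt_id
      | succ k ihk =>
        have hout : ContinuousWithinAt r (Set.Ici 0) ((fun t => r^[k] t) 0) := by
          simpa [hrit0 k] using hrcont
        have := hout.comp ihk (fun t ht => Set.mem_Ici.2 (hritnn k t ht))
        simpa [Function.comp_def, Function.iterate_succ_apply'] using this
    have hout : ContinuousWithinAt ω (Set.Ici 0) ((fun t => r^[k] t) 0) := by
      simpa [hrit0 k] using hωcont
    exact hout.comp hrk (fun t ht => Set.mem_Ici.2 (hritnn k t ht))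
  have hFsum : ContinuousWithinAt (fun t => ∑ k ∈ Finset.range M, ω (r^[k] t))
      (Set.Ici 0) 0 := by
    exact tendsto_finset_sum _ fun k _ => hcontk k
  obtain ⟨δ₁, hδ₁pos, hδ₁⟩ := Metric.continuousWithinAt_iff.1 hFsum (ε / (3 * (C + 1))) hε3
  have hK1 : (0:ℝ) < (K : ℝ) + 1 := by positivity
  set δ : ℝ := min δ₁ (min t₀ (ε / (3 * ((K : ℝ) + 1)))) with hδdef
  have hδpos : 0 < δ := lt_min hδ₁pos (lt_min ht₀pos (by positivity))
  refine ⟨δ, hδpos, fun y hy n => ?_⟩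
  set t : ℝ := dist y x₀ with htdef
  have ht0 : 0 ≤ t := dist_nonneg
  have htδ₁ : t < δ₁ := hy.trans_le (min_le_left _ _)
  have htt₀ : t ≤ t₀ := (hy.trans_le ((min_le_right _ _).trans (min_le_left _ _))).le
  have htT : t < T := htt₀.trans_lt ht₀T
  have htK : t < ε / (3 * ((K : ℝ) + 1)) :=
    hy.trans_le ((min_le_right _ _).trans (min_le_right _ _))
  refine (hmod n y x₀).trans_lt ?_
  -- first part of g
  have hb1 : (K : ℝ) * r^[n] t < ε / 3 := by
    have h1 : r^[n] t ≤ t := hritle n t ht0 htT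
    have h2 : (K : ℝ) * r^[n] t ≤ ((K : ℝ) + 1) * t := by
      have := mul_le_mul_of_nonneg_left h1 K.coe_nonneg
      nlinarith [hritnn n t ht0]
    have h3 : ((K : ℝ) + 1) * t < ((K : ℝ) + 1) * (ε / (3 * ((K : ℝ) + 1))) :=
      mul_lt_mul_of_pos_left htK hK1
    have h4 : ((K : ℝ) + 1) * (ε / (3 * ((K : ℝ) + 1))) = ε / 3 := by
      field_simp
    linarith
  -- second part of g
  have hS1 : ∑ k ∈ Finset.range M, ω (r^[k] t) < ε / (3 * (C + 1)) := by
    have := hδ₁ (Set.mem_Ici.2 ht0) (by simpa [Real.dist_eq, abs_of_nonneg ht0] using htδ₁)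
    rw [Real.dist_eq] at this
    have h0 : ∑ k ∈ Finset.range M, ω (r^[k] (0:ℝ)) = 0 := by
      refine Finset.sum_eq_zero fun k _ => ?_
      rw [hrit0 k, hω0]
    rw [h0, sub_zero] at this
    exact (le_abs_self _).trans_lt this
  have hSsplit : ∑ k ∈ Finset.range n, ω (r^[k] t)
      ≤ ∑ k ∈ Finset.range M, ω (r^[k] t) + ∑' k, f (k + M₀) := by
    have hnn : ∀ k, 0 ≤ ω (r^[k] t) := fun k => hωnn _ (hritnn k t ht0)
    have hmax : ∑ k ∈ Finset.range n, ω (r^[k] t)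
        ≤ ∑ k ∈ Finset.range (max n M), ω (r^[k] t) :=
      Finset.sum_le_sum_of_subset_of_nonneg
        (Finset.range_subset_range.2 (le_max_left _ _)) (fun k _ _ => hnn k)
    refine hmax.trans ?_
    have hMle : M ≤ max n M := le_max_right _ _
    have hdecomp : max n M = M + (max n M - M) := by omega
    rw [hdecomp, Finset.sum_range_add]
    refine add_le_add le_rfl ?_
    have hstep : ∀ i : ℕ, ω (r^[M + i] t) ≤ f (i + M₀) := by
      intro i
      have hle : r^[M + i] t ≤ r^[M + i] t₀ := hritmono _ t t₀ ht0 htt₀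
      have : ω (r^[M + i] t) ≤ ω (r^[M + i] t₀) :=
        hωmono (Set.mem_Ici.2 (hritnn _ t ht0)) (Set.mem_Ici.2 (hritnn _ t₀ ht₀pos.le)) hle
      have hidx : (i + M₀) + 1 = M + i := by omega
      show ω (r^[M + i] t) ≤ ω (r^[(i + M₀) + 1] t₀)
      rw [hidx]
      exact this
    refine (Finset.sum_le_sum fun i _ => hstep i).trans ?_
    exact Summable.sum_le_tsum _ (fun i _ => hfnn _) hsumshift
  have hb2 : C * ∑ k ∈ Finset.range n, ω (r^[k] t) < 2 * (ε / 3) := by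
    have hSnn : 0 ≤ ∑ k ∈ Finset.range n, ω (r^[k] t) :=
      Finset.sum_nonneg fun k _ => hωnn _ (hritnn k t ht0)
    have hS : ∑ k ∈ Finset.range n, ω (r^[k] t) < 2 * (ε / (3 * (C + 1))) := by
      refine hSsplit.trans_lt ?_
      linarith
    have h1 : C * ∑ k ∈ Finset.range n, ω (r^[k] t)
        ≤ (C + 1) * ∑ k ∈ Finset.range n, ω (r^[k] t) := by nlinarith
    have h2 : (C + 1) * ∑ k ∈ Finset.range n, ω (r^[k] t)
        < (C + 1) * (2 * (ε / (3 * (C + 1)))) :=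
      mul_lt_mul_of_pos_left hS (by positivity)
    have h3 : (C + 1) * (2 * (ε / (3 * (C + 1)))) = 2 * (ε / 3) := by
      field_simp
    linarith
  have : g n t = (K : ℝ) * r^[n] t + C * ∑ k ∈ Finset.range n, ω (r^[k] t) := rfl
  rw [this]
  linarith
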